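/- Let R' ⊆ R be complete Noetherian local rings with maximal ideals m' and m satisfying m ∩ R' = m' and with equal residue fields. Let Γ be a profinite group, ρ : Γ → GL_n(R) a continuous representation whose reduction mod m is absolutely irreducible, and suppose tr ρ(γ) ∈ R' for all γ ∈ Γ. If moreover ρ preserves a perfect bilinear form up to a similitude character ν with ν(Γ) ⊆ (R')^×, and ρ' is the Carayol descent of ρ to GL_n(R'), then ρ' also preserves a perfect bilinear form of the same type (symmetric or alternating) with similitude ν, defined over R'. -/

import Mathlib

open Matrix IsLocalRing

/-- A representation into `n × n` matrices over a field is absolutely irreducible iff the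
linear span of its image is the full matrix algebra (Burnside). -/
def AbsIrred {k : Type*} [Field k] {n : ℕ} {Γ : Type*}
    (ρ : Γ → Matrix (Fin n) (Fin n) k) : Prop :=
  Submodule.span k (Set.range ρ) = (⊤ : Submodule k (Matrix (Fin n) (Fin n) k))

section CarayolHelpers

variable {R : Type*} [CommRing R] {n : ℕ}

local notation "Mat" => Matrix (Fin n) (Fin n) R

/-- In a local ring, an invertible matrix (n ≥ 1) has an entry outside the maximal ideal. -/
lemma exists_entry_isUnit [IsLocalRing R] (hn : 0 < n) (A : Mat) (hA : IsUnit A.det) :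
    ∃ i j, A i j ∉ maximalIdeal R := by
  by_contra h
  push_neg at h
  have hdet : A.det ∈ maximalIdeal R := by
    rw [Matrix.det_apply]
    refine Ideal.sum_mem _ fun σ _ => Submodule.smul_of_tower_mem _ _ ?_
    have i0 : Fin n := ⟨0, hn⟩
    rw [← Finset.mul_prod_erase Finset.univ _ (Finset.mem_univ i0)]
    exact Ideal.mul_mem_right _ _ (h _ _)
  exact (IsLocalRing.mem_maximalIdeal _).mp hdet hA

/-- The submodule of matrices with entries in a subring. -/
def entriesIn (R' : Subring R) (n : ℕ) : Submodule R' (Matrix (Fin n) (Fin n) R) where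
  carrier := {X | ∀ i j, X i j ∈ R'}
  add_mem' := fun hX hY i j => add_mem (hX i j) (hY i j)
  zero_mem' := fun i j => by simpa using R'.zero_mem
  smul_mem' := fun c X hX i j => by
    simpa [Matrix.smul_apply, Subring.smul_def] using mul_mem c.2 (hX i j)

lemma mem_entriesIn {R' : Subring R} {X : Mat} :
    X ∈ entriesIn R' n ↔ ∀ i j, X i j ∈ R' := Iff.rfl

lemma smul_stdBasisMatrix' (R' : Subring R) (i j : Fin n) (c : R') :
    Matrix.single i j (c : R) = c • Matrix.single i j (1 : R) := by
  ext a b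
  simp only [Matrix.smul_apply, Subring.smul_def, Matrix.single, Matrix.of_apply]
  by_cases h : i = a ∧ j = b <;> simp [h]

lemma stdBasisMatrix_mem_entriesIn (R' : Subring R) (a b : Fin n) :
    Matrix.single a b (1 : R) ∈ entriesIn R' n := by
  intro i j
  simp only [Matrix.single, Matrix.of_apply]
  by_cases h : a = i ∧ b = j <;> simp [h, R'.one_mem, R'.zero_mem]

lemma entriesIn_eq_span (R' : Subring R) (n : ℕ) :
    entriesIn R' n =
      Submodule.span R' (Set.range fun p : Fin n × Fin n => Matrix.single p.1 p.2 (1 : R)) := by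
  refine le_antisymm ?_ ?_
  · intro X hX
    rw [Matrix.matrix_eq_sum_single X]
    refine Submodule.sum_mem _ fun i _ => Submodule.sum_mem _ fun j _ => ?_
    rw [show X i j = ((⟨X i j, hX i j⟩ : R') : R) from rfl, smul_stdBasisMatrix']
    exact Submodule.smul_mem _ _ (Submodule.subset_span ⟨(i, j), rfl⟩)
  · rw [Submodule.span_le]
    rintro _ ⟨p, rfl⟩
    exact stdBasisMatrix_mem_entriesIn R' p.1 p.2

lemma entriesIn_fg (R' : Subring R) (n : ℕ) : (entriesIn R' n).FG := by
  rw [entriesIn_eq_span]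
  exact Submodule.fg_span (Set.finite_range _)

lemma subring_smul_eq (R' : Subring R) (c : R') (X : Mat) : c • X = (c : R) • X := by
  ext i j
  simp [Matrix.smul_apply, Subring.smul_def]

lemma conj_pairing (C P J : (Mat)ˣ) (νg : R)
    (hrel : (P : Mat)ᵀ * (J : Mat) * (P : Mat) = νg • (J : Mat)) :
    ((C : Mat) * (P : Mat) * ((C⁻¹ : Matˣ) : Mat))ᵀ *
      (((C⁻¹ : Matˣ) : Mat)ᵀ * (J : Mat) * ((C⁻¹ : Matˣ) : Mat)) *
      ((C : Mat) * (P : Mat) * ((C⁻¹ : Matˣ) : Mat)) =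
      νg • (((C⁻¹ : Matˣ) : Mat)ᵀ * (J : Mat) * ((C⁻¹ : Matˣ) : Mat)) := by
  have c1 : ∀ X : Mat, X * (C : Mat)ᵀ * ((C⁻¹ : Matˣ) : Mat)ᵀ = X := fun X => by
    rw [Matrix.mul_assoc, ← Matrix.transpose_mul, C.inv_mul, Matrix.transpose_one, Matrix.mul_one]
  have c2 : ∀ X : Mat, X * ((C⁻¹ : Matˣ) : Mat) * (C : Mat) = X := fun X => by
    rw [Matrix.mul_assoc, C.inv_mul, Matrix.mul_one]
  simp only [Matrix.transpose_mul, ← Matrix.mul_assoc]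
  rw [c1, c2, Matrix.mul_assoc (((C⁻¹ : Matˣ) : Mat)ᵀ) ((P : Mat)ᵀ) (J : Mat),
    Matrix.mul_assoc (((C⁻¹ : Matˣ) : Mat)ᵀ) ((P : Mat)ᵀ * (J : Mat)) (P : Mat),
    hrel, Matrix.mul_smul, Matrix.smul_mul, Matrix.mul_assoc]

lemma intertwine (P : (Mat)ˣ) (Jm Jinv : Mat) (hJ : Jm * Jinv = 1) (νg : R)
    (hrel : (P : Mat)ᵀ * Jm * (P : Mat) = νg • Jm) :
    Jm * (P : Mat) * Jinv = νg • (((P⁻¹ : Matˣ) : Mat))ᵀ := by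
  have h1 : ((P⁻¹ : Matˣ) : Mat)ᵀ * (P : Mat)ᵀ = 1 := by
    rw [← Matrix.transpose_mul, P.mul_inv, Matrix.transpose_one]
  have key : Jm * (P : Mat) = ((P⁻¹ : Matˣ) : Mat)ᵀ * ((P : Mat)ᵀ * Jm * (P : Mat)) := by
    rw [← Matrix.mul_assoc, ← Matrix.mul_assoc, h1, Matrix.one_mul]
  rw [key, hrel, Matrix.mul_smul, Matrix.smul_mul, Matrix.mul_assoc, hJ, Matrix.mul_one]

lemma triple_std (A B : Mat) (a b i j : Fin n) :
    (A * Matrix.single a b (1 : R) * B) i j = A i a * B b j := by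
  rw [Matrix.mul_assoc, Matrix.mul_apply, Finset.sum_eq_single a]
  · rw [Matrix.single_mul_apply_same, one_mul]
  · intro c _ hc
    rw [Matrix.single_mul_apply_of_ne 1 a b c j hc, mul_zero]
  · intro h; exact absurd (Finset.mem_univ a) h

lemma form_mul_inv (C J : (Mat)ˣ) :
    (((C⁻¹ : Matˣ) : Mat)ᵀ * (J : Mat) * ((C⁻¹ : Matˣ) : Mat)) *
      ((C : Mat) * ((J⁻¹ : Matˣ) : Mat) * (C : Mat)ᵀ) = 1 := by
  simp only [Matrix.mul_assoc]
  rw [show ((C⁻¹ : Matˣ) : Mat) * ((C : Mat) * (((J⁻¹ : Matˣ) : Mat) * (C : Mat)ᵀ)) =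
      ((J⁻¹ : Matˣ) : Mat) * (C : Mat)ᵀ by
    rw [← Matrix.mul_assoc, C.inv_mul, Matrix.one_mul]]
  rw [show (J : Mat) * (((J⁻¹ : Matˣ) : Mat) * (C : Mat)ᵀ) = (C : Mat)ᵀ by
    rw [← Matrix.mul_assoc, J.mul_inv, Matrix.one_mul]]
  rw [← Matrix.transpose_mul, C.mul_inv, Matrix.transpose_one]

lemma form_inv_mul (C J : (Mat)ˣ) :
    ((C : Mat) * ((J⁻¹ : Matˣ) : Mat) * (C : Mat)ᵀ) *
      (((C⁻¹ : Matˣ) : Mat)ᵀ * (J : Mat) * ((C⁻¹ : Matˣ) : Mat)) = 1 := by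
  simp only [Matrix.mul_assoc]
  rw [show (C : Mat)ᵀ * (((C⁻¹ : Matˣ) : Mat)ᵀ * ((J : Mat) * ((C⁻¹ : Matˣ) : Mat))) =
      (J : Mat) * ((C⁻¹ : Matˣ) : Mat) by
    rw [← Matrix.mul_assoc, ← Matrix.transpose_mul, C.inv_mul, Matrix.transpose_one,
      Matrix.one_mul]]
  rw [show ((J⁻¹ : Matˣ) : Mat) * ((J : Mat) * ((C⁻¹ : Matˣ) : Mat)) = ((C⁻¹ : Matˣ) : Mat) by
    rw [← Matrix.mul_assoc, J.inv_mul, Matrix.one_mul]]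
  exact C.mul_inv

lemma form_symm (C J : (Mat)ˣ) (ε : R) (hJsym : (J : Mat)ᵀ = ε • (J : Mat)) :
    (((C⁻¹ : Matˣ) : Mat)ᵀ * (J : Mat) * ((C⁻¹ : Matˣ) : Mat))ᵀ =
      ε • (((C⁻¹ : Matˣ) : Mat)ᵀ * (J : Mat) * ((C⁻¹ : Matˣ) : Mat)) := by
  rw [Matrix.transpose_mul, Matrix.transpose_mul, Matrix.transpose_transpose, hJsym,
    Matrix.smul_mul, Matrix.mul_smul, Matrix.mul_assoc]

lemma pair_smul_inv (w : Rˣ) (M Minv : Mat) (h : M * Minv = 1) :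
    (((w⁻¹ : Rˣ) : R) • M) * (((w : Rˣ) : R) • Minv) = 1 := by
  rw [Matrix.smul_mul, Matrix.mul_smul, smul_smul, w.inv_mul, one_smul, h]

lemma pair_smul_inv' (w : Rˣ) (M Minv : Mat) (h : Minv * M = 1) :
    (((w : Rˣ) : R) • Minv) * (((w⁻¹ : Rˣ) : R) • M) = 1 := by
  rw [Matrix.smul_mul, Matrix.mul_smul, smul_smul, w.mul_inv, one_smul, h]

lemma rel_smul (w : R) (A M : Mat) (νg : R) (h : Aᵀ * M * A = νg • M) :
    Aᵀ * (w • M) * A = νg • (w • M) := by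
  rw [Matrix.mul_smul, Matrix.smul_mul, h, smul_smul, mul_comm, ← smul_smul]

lemma sym_smul (w : R) (M : Mat) (ε : R) (h : Mᵀ = ε • M) :
    (w • M)ᵀ = ε • (w • M) := by
  rw [Matrix.transpose_smul, h, smul_comm]

end CarayolHelpers

/-- Carayol's lemma for self-dual representations: let `R' ⊆ R` be
complete Noetherian local rings with `m ∩ R' = m'` and equal residue fields, `ρ` a
representation to `GL_n(R)` with residually absolutely irreducible reduction and traces
in `R'`, preserving a perfect bilinear form `J` of sign `ε` up to a similitude `ν` valued
in `R'`. If `ρ'` is a Carayol descent of `ρ` (a conjugate of `ρ` with entries in `R'`),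
then `ρ'` preserves a perfect bilinear form of the same type with similitude `ν`,
defined over `R'`. -/
theorem carayol_descent_of_pairing
    (R : Type*) [CommRing R] [IsNoetherianRing R] [IsLocalRing R]
    [IsAdicComplete (IsLocalRing.maximalIdeal R) R]
    (R' : Subring R) [IsNoetherianRing R'] [IsLocalRing R']
    [IsAdicComplete (IsLocalRing.maximalIdeal R') R']
    (hm : Ideal.comap R'.subtype (IsLocalRing.maximalIdeal R) = IsLocalRing.maximalIdeal R')
    (hres : Function.Surjective (fun x : R' => IsLocalRing.residue R (x : R)))
    (n : ℕ) (Γ : Type*) [Group Γ]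
    (ρ : Γ →* (Matrix (Fin n) (Fin n) R)ˣ)
    (hirr : AbsIrred (fun g : Γ => ((ρ g : Matrix (Fin n) (Fin n) R)).map (IsLocalRing.residue R)))
    (htr : ∀ g : Γ, Matrix.trace (ρ g : Matrix (Fin n) (Fin n) R) ∈ R')
    (ν : Γ →* Rˣ) (hν : ∀ g : Γ, (ν g : R) ∈ R')
    (ε : R) (hε : ε = 1 ∨ ε = -1)
    (J : (Matrix (Fin n) (Fin n) R)ˣ)
    (hJsym : ((J : Matrix (Fin n) (Fin n) R))ᵀ = ε • (J : Matrix (Fin n) (Fin n) R))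
    (hJρ : ∀ g : Γ, ((ρ g : Matrix (Fin n) (Fin n) R))ᵀ * (J : Matrix (Fin n) (Fin n) R) *
      (ρ g : Matrix (Fin n) (Fin n) R) = (ν g : R) • (J : Matrix (Fin n) (Fin n) R))
    (ρ' : Γ →* (Matrix (Fin n) (Fin n) R)ˣ)
    (hconj : ∃ C : (Matrix (Fin n) (Fin n) R)ˣ, ∀ g : Γ,
      (ρ' g : Matrix (Fin n) (Fin n) R) =
        (C : Matrix (Fin n) (Fin n) R) * (ρ g : Matrix (Fin n) (Fin n) R) *
          (↑C⁻¹ : Matrix (Fin n) (Fin n) R))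
    (hent : ∀ (g : Γ) (i j : Fin n), (ρ' g : Matrix (Fin n) (Fin n) R) i j ∈ R') :
    ∃ J' : (Matrix (Fin n) (Fin n) R)ˣ,
      (∀ i j : Fin n, (J' : Matrix (Fin n) (Fin n) R) i j ∈ R') ∧
      (∀ i j : Fin n, (↑J'⁻¹ : Matrix (Fin n) (Fin n) R) i j ∈ R') ∧
      ((J' : Matrix (Fin n) (Fin n) R))ᵀ = ε • (J' : Matrix (Fin n) (Fin n) R) ∧
      ∀ g : Γ, ((ρ' g : Matrix (Fin n) (Fin n) R))ᵀ * (J' : Matrix (Fin n) (Fin n) R) *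
        (ρ' g : Matrix (Fin n) (Fin n) R) = (ν g : R) • (J' : Matrix (Fin n) (Fin n) R) := by
  classical
  rcases Nat.eq_zero_or_pos n with hn | hpos
  · subst hn
    exact ⟨1, fun i j => i.elim0, fun i j => i.elim0, Subsingleton.elim _ _,
      fun g => Subsingleton.elim _ _⟩
  obtain ⟨C, hC⟩ := hconj
  -- Step A: the image of the reduction of ρ' spans everything over the residue field
  have hspan' : Submodule.span (ResidueField R) (Set.range fun g : Γ =>
      ((ρ' g : Matrix (Fin n) (Fin n) R)).map (residue R)) = ⊤ := by
    set k := ResidueField R with hk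
    set Cu : (Matrix (Fin n) (Fin n) k)ˣ :=
      Units.map ((residue R).mapMatrix (m := Fin n)).toMonoidHom C with hCu
    set L : Matrix (Fin n) (Fin n) k →ₗ[k] Matrix (Fin n) (Fin n) k :=
      (LinearMap.mulRight k ((Cu⁻¹ : _ˣ) : Matrix (Fin n) (Fin n) k)) ∘ₗ
        (LinearMap.mulLeft k ((Cu : Matrix (Fin n) (Fin n) k))) with hL
    have hLapp : ∀ X, L X = (Cu : Matrix (Fin n) (Fin n) k) * X *
        ((Cu⁻¹ : _ˣ) : Matrix (Fin n) (Fin n) k) := fun X => rfl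
    have hpoint : ∀ g : Γ, ((ρ' g : Matrix (Fin n) (Fin n) R)).map (residue R) =
        L (((ρ g : Matrix (Fin n) (Fin n) R)).map (residue R)) := by
      intro g
      rw [hLapp, hC g]
      show ((residue R).mapMatrix (m := Fin n)) _ =
        ((residue R).mapMatrix (m := Fin n)) _ * ((residue R).mapMatrix (m := Fin n)) _ *
          ((residue R).mapMatrix (m := Fin n)) _
      rw [← _root_.map_mul, ← _root_.map_mul]
      rfl
    have hsurj : Function.Surjective L := by
      intro Y
      refine ⟨((Cu⁻¹ : _ˣ) : Matrix (Fin n) (Fin n) k) * Y * (Cu : Matrix (Fin n) (Fin n) k), ?_⟩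
      rw [hLapp]
      calc (Cu : Matrix (Fin n) (Fin n) k) * (((Cu⁻¹ : _ˣ) : _) * Y * (Cu : _)) * ((Cu⁻¹ : _ˣ) : _)
          = ((Cu : Matrix (Fin n) (Fin n) k) * ((Cu⁻¹ : _ˣ) : _)) * Y *
            ((Cu : _) * ((Cu⁻¹ : _ˣ) : _)) := by
            simp only [Matrix.mul_assoc]
        _ = Y := by rw [Cu.mul_inv, Matrix.one_mul, Matrix.mul_one]
    have hcomp : (fun g : Γ => ((ρ' g : Matrix (Fin n) (Fin n) R)).map (residue R)) =
        L ∘ (fun g : Γ => ((ρ g : Matrix (Fin n) (Fin n) R)).map (residue R)) := funext hpoint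
    have hirr' : Submodule.span k (Set.range fun g : Γ =>
        ((ρ g : Matrix (Fin n) (Fin n) R)).map (residue R)) = ⊤ := hirr
    rw [hcomp, Set.range_comp, Submodule.span_image, hirr', Submodule.map_top,
      LinearMap.range_eq_top.mpr hsurj]
  -- Step B + C: matrices with entries in R' lie in the R'-span of the image of ρ'
  have hPN : entriesIn R' n ≤
      Submodule.span R' (Set.range fun g : Γ => (ρ' g : Matrix (Fin n) (Fin n) R)) ⊔
        (maximalIdeal R') • entriesIn R' n := by
    intro X hX
    have hXk : (X.map (residue R)) ∈ Submodule.span (ResidueField R) (Set.range fun g : Γ =>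
        ((ρ' g : Matrix (Fin n) (Fin n) R)).map (residue R)) := by rw [hspan']; trivial
    obtain ⟨c, hc⟩ := Finsupp.mem_span_range_iff_exists_finsupp.mp hXk
    choose d hd using fun g : Γ => hres (c g)
    have hd' : ∀ g : Γ, residue R ((d g : R)) = c g := hd
    set Y : Matrix (Fin n) (Fin n) R := ∑ g ∈ c.support, (d g) • (ρ' g : Matrix (Fin n) (Fin n) R)
      with hY
    have hYN : Y ∈ Submodule.span R' (Set.range fun g : Γ => (ρ' g : Matrix (Fin n) (Fin n) R)) :=
      Submodule.sum_mem _ fun g _ =>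
        Submodule.smul_mem _ _ (Submodule.subset_span ⟨g, rfl⟩)
    have hYapp : ∀ i j, Y i j = ∑ g ∈ c.support,
        (d g : R) * (ρ' g : Matrix (Fin n) (Fin n) R) i j := by
      intro i j
      rw [hY, Matrix.sum_apply]
      refine Finset.sum_congr rfl fun g _ => ?_
      rw [subring_smul_eq, Matrix.smul_apply, smul_eq_mul]
    have hYR' : ∀ i j, Y i j ∈ R' := fun i j => by
      rw [hYapp]
      exact Subring.sum_mem _ fun g _ => R'.mul_mem (d g).2 (hent g i j)
    have hZm : ∀ i j, (X - Y) i j ∈ maximalIdeal R := by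
      intro i j
      rw [← residue_eq_zero_iff]
      have hcij : ∑ g ∈ c.support, c g * (residue R) ((ρ' g : Matrix (Fin n) (Fin n) R) i j) =
          residue R (X i j) := by
        have := congrArg (fun A : Matrix (Fin n) (Fin n) (ResidueField R) => A i j) hc
        simpa [Finsupp.sum, Matrix.sum_apply, Matrix.smul_apply, Matrix.map_apply,
          smul_eq_mul] using this
      have hYres : residue R (Y i j) = residue R (X i j) := by
        rw [hYapp, map_sum, ← hcij]
        refine Finset.sum_congr rfl fun g _ => ?_
        rw [_root_.map_mul, hd' g]
      rw [Matrix.sub_apply, map_sub, hYres, sub_self]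
    have hZ : X - Y ∈ (maximalIdeal R') • entriesIn R' n := by
      rw [Matrix.matrix_eq_sum_single (X - Y)]
      refine Submodule.sum_mem _ fun i _ => Submodule.sum_mem _ fun j _ => ?_
      have hzr : (X - Y) i j ∈ R' := by
        rw [Matrix.sub_apply]
        exact R'.sub_mem (hX i j) (hYR' i j)
      rw [show (X - Y) i j = ((⟨(X - Y) i j, hzr⟩ : R') : R) from rfl, smul_stdBasisMatrix']
      refine Submodule.smul_mem_smul ?_ (stdBasisMatrix_mem_entriesIn R' i j)
      rw [← hm]
      exact Ideal.mem_comap.mpr (hZm i j)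
    have hXY : X = Y + (X - Y) := by abel
    rw [hXY]
    exact Submodule.add_mem_sup hYN hZ
  have hPleN : entriesIn R' n ≤
      Submodule.span R' (Set.range fun g : Γ => (ρ' g : Matrix (Fin n) (Fin n) R)) :=
    Submodule.le_of_le_smul_of_le_jacobson_bot (entriesIn_fg R' n)
      (IsLocalRing.jacobson_eq_maximalIdeal ⊥ bot_ne_top).ge hPN
  -- Step D: transport the form along the conjugation and normalize one entry to 1
  obtain ⟨Jm, Jinv, hJmJinv, hJinvJm, hrel', hJmsym, i0, j0, hJm1⟩ :
      ∃ Jm Jinv : Matrix (Fin n) (Fin n) R, Jm * Jinv = 1 ∧ Jinv * Jm = 1 ∧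
        (∀ g : Γ, ((ρ' g : Matrix (Fin n) (Fin n) R))ᵀ * Jm *
          (ρ' g : Matrix (Fin n) (Fin n) R) = (ν g : R) • Jm) ∧
        Jmᵀ = ε • Jm ∧ ∃ i0 j0 : Fin n, Jm i0 j0 = 1 := by
    have hMMinv := form_mul_inv C J
    have hMinvM := form_inv_mul C J
    have hMsym := form_symm C J ε hJsym
    have hMrel : ∀ g : Γ, ((ρ' g : Matrix (Fin n) (Fin n) R))ᵀ *
        (((C⁻¹ : _ˣ) : Matrix (Fin n) (Fin n) R)ᵀ * (J : Matrix (Fin n) (Fin n) R) *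
          ((C⁻¹ : _ˣ) : Matrix (Fin n) (Fin n) R)) * (ρ' g : Matrix (Fin n) (Fin n) R) =
        (ν g : R) • (((C⁻¹ : _ˣ) : Matrix (Fin n) (Fin n) R)ᵀ * (J : Matrix (Fin n) (Fin n) R) *
          ((C⁻¹ : _ˣ) : Matrix (Fin n) (Fin n) R)) := by
      intro g
      rw [hC g]
      exact conj_pairing C (ρ g) J (ν g) (hJρ g)
    have hMunit : IsUnit (((C⁻¹ : _ˣ) : Matrix (Fin n) (Fin n) R)ᵀ *
        (J : Matrix (Fin n) (Fin n) R) * ((C⁻¹ : _ˣ) : Matrix (Fin n) (Fin n) R)) :=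
      ⟨⟨_, _, hMMinv, hMinvM⟩, rfl⟩
    obtain ⟨i0, j0, hij⟩ := exists_entry_isUnit hpos _ (hMunit.map Matrix.detMonoidHom)
    have hu : IsUnit ((((C⁻¹ : _ˣ) : Matrix (Fin n) (Fin n) R)ᵀ *
        (J : Matrix (Fin n) (Fin n) R) * ((C⁻¹ : _ˣ) : Matrix (Fin n) (Fin n) R)) i0 j0) := by
      by_contra h
      exact hij ((IsLocalRing.mem_maximalIdeal _).mpr h)
    refine ⟨((hu.unit⁻¹ : Rˣ) : R) • _, ((hu.unit : Rˣ) : R) • _,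
      pair_smul_inv hu.unit _ _ hMMinv, pair_smul_inv' hu.unit _ _ hMinvM,
      fun g => rel_smul _ _ _ _ (hMrel g), sym_smul _ _ _ hMsym, i0, j0, ?_⟩
    rw [Matrix.smul_apply, smul_eq_mul]
    have h := hu.unit.inv_mul
    rwa [hu.unit_spec] at h
  -- Step F: entries of Jm and Jinv lie in R'
  have hgen : ∀ g : Γ, Jm * (ρ' g : Matrix (Fin n) (Fin n) R) * Jinv ∈ entriesIn R' n := by
    intro g
    rw [intertwine (ρ' g) Jm Jinv hJmJinv (ν g) (hrel' g)]
    intro i j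
    rw [Matrix.smul_apply, Matrix.transpose_apply, smul_eq_mul, ← map_inv ρ' g]
    exact R'.mul_mem (hν g) (hent g⁻¹ j i)
  have hτP : ∀ X, X ∈ entriesIn R' n → Jm * X * Jinv ∈ entriesIn R' n := by
    intro X hX
    have hXN : X ∈ Submodule.span R'
        (Set.range fun g : Γ => (ρ' g : Matrix (Fin n) (Fin n) R)) := hPleN hX
    refine Submodule.span_induction ?_ ?_ ?_ ?_ hXN
    · rintro _ ⟨g, rfl⟩
      exact hgen g
    · rw [Matrix.mul_zero, Matrix.zero_mul]
      exact (entriesIn R' n).zero_mem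
    · intro x y _ _ hx hy
      rw [Matrix.mul_add, Matrix.add_mul]
      exact (entriesIn R' n).add_mem hx hy
    · intro c x _ hx
      rw [subring_smul_eq, Matrix.mul_smul, Matrix.smul_mul, ← subring_smul_eq]
      exact (entriesIn R' n).smul_mem c hx
  have hpair : ∀ a b i j : Fin n, Jm i a * Jinv b j ∈ R' := by
    intro a b i j
    have := hτP _ (stdBasisMatrix_mem_entriesIn R' a b) i j
    rwa [triple_std] at this
  have hJinvR' : ∀ b j, Jinv b j ∈ R' := fun b j => by
    have := hpair j0 b i0 j
    rwa [hJm1, one_mul] at this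
  have hJinvUnit : IsUnit Jinv := ⟨⟨Jinv, Jm, hJinvJm, hJmJinv⟩, rfl⟩
  obtain ⟨b1, j1, hb1⟩ := exists_entry_isUnit hpos Jinv (hJinvUnit.map Matrix.detMonoidHom)
  have hx'u : IsUnit (⟨Jinv b1 j1, hJinvR' b1 j1⟩ : R') := by
    by_contra h
    apply hb1
    have hmem : (⟨Jinv b1 j1, hJinvR' b1 j1⟩ : R') ∈ maximalIdeal R' :=
      (IsLocalRing.mem_maximalIdeal _).mpr h
    rw [← hm] at hmem
    exact Ideal.mem_comap.mp hmem
  have hv' : ((hx'u.unit : R') : R) = Jinv b1 j1 := congrArg _ hx'u.unit_spec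
  have hxy : Jinv b1 j1 * (((hx'u.unit⁻¹ : R'ˣ) : R') : R) = 1 := by
    have h := congrArg (fun t : R' => (t : R)) hx'u.unit.mul_inv
    push_cast at h
    rw [hv'] at h
    exact h
  have hJmR' : ∀ i a, Jm i a ∈ R' := by
    intro i a
    have h1 := hpair a b1 i j1
    have heq : Jm i a = Jm i a * Jinv b1 j1 * (((hx'u.unit⁻¹ : R'ˣ) : R') : R) := by
      rw [mul_assoc, hxy, mul_one]
    rw [heq]
    exact R'.mul_mem h1 ((hx'u.unit⁻¹ : R'ˣ) : R').2
  exact ⟨⟨Jm, Jinv, hJmJinv, hJinvJm⟩, hJmR', hJinvR', hJmsym, hrel'⟩
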